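/- Fix a positive integer d. Let p ≡ 1 (mod d) be an odd prime, a a positive integer, and ω a unit of multiplicative order d modulo p^a. Then the image of the cyclic supercharacter σ_ω modulo p^a is contained in the image of the function g_d : 𝕋^{φ(d)} → ℂ given by g_d(z_1,…,z_{φ(d)}) = Σ_{k=1}^{d} Π_{j=1}^{φ(d)} z_j^{c_{j,k}}, where the integers c_{j,k} are determined by x^k ≡ Σ_{j=1}^{φ(d)} c_{j,k} x^{j−1} (mod Φ_d(x)). -/

import Mathlib

open Finset Pointwise

/-- `e(θ) = exp(2πiθ)`. -/
noncomputable def e2 (θ : ℝ) : ℂ := Complex.exp (2 * Real.pi * Complex.I * θ)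

/-- The cyclic supercharacter `σ_ω : ℤ/nℤ → ℂ` attached to a unit `ω` mod `n`:
`σ_ω(y) = ∑_{j=1}^{d} e(ω^j y / n)` where `d` is the multiplicative order of `ω`. -/
noncomputable def cyclicSuperchar (n : ℕ) (ω : (ZMod n)ˣ) (y : ZMod n) : ℂ :=
  ∑ j ∈ Finset.Icc 1 (orderOf ω),
    e2 (((((ω ^ j : (ZMod n)ˣ) : ZMod n) * y).val : ℝ) / (n : ℝ))

/-- `H m`: the set of traces of matrices in `SU_m(ℂ)` (the filled `m`-cusped hypocycloid). -/
noncomputable def H (m : ℕ) : Set ℂ :=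
  Set.range fun M : Matrix.specialUnitaryGroup (Fin m) ℂ =>
    Matrix.trace (M : Matrix (Fin m) (Fin m) ℂ)

/-- `P m`: the convex hull of `H m` (the filled regular `m`-gon). -/
noncomputable def Pset (m : ℕ) : Set ℂ := convexHull ℝ (H m)

/-- `c_{j,k}` : the coefficient of `x^j` in the remainder of `x^k` mod `Φ_d(x)`. -/
noncomputable def cExp (d j k : ℕ) : ℤ :=
  (((Polynomial.X : Polynomial ℤ) ^ k) %ₘ Polynomial.cyclotomic d ℤ).coeff j

/-- The Laurent-polynomial map `g_d(z_1,…,z_{φ(d)}) = ∑_{k=1}^d ∏_j z_j^{c_{j,k}}`. -/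
noncomputable def gphi (d : ℕ) (z : Fin (Nat.totient d) → ℂ) : ℂ :=
  ∑ k ∈ Finset.Icc 1 d, ∏ j : Fin (Nat.totient d), z j ^ (cExp d (j : ℕ) k)

/-- The image of `g_d` restricted to the torus `𝕋^{φ(d)}`. -/
noncomputable def gImage (d : ℕ) : Set ℂ :=
  {w : ℂ | ∃ z : Fin (Nat.totient d) → ℂ, (∀ j, ‖z j‖ = 1) ∧ gphi d z = w}

/-- The `k`-fold Minkowski sum `A^{⊕k}` of a subset of `ℂ` with itself. -/
def minkSumPow (A : Set ℂ) (k : ℕ) : Set ℂ :=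
  {z : ℂ | ∃ f : Fin k → ℂ, (∀ i, f i ∈ A) ∧ ∑ i, f i = z}

/-- Scaling a subset of `ℂ` by a real number. -/
def scale (r : ℝ) (A : Set ℂ) : Set ℂ := (fun z => (r : ℂ) * z) '' A

/-- The sets `A k` fill out `B` as `k → ∞`. -/
def FillsOut (A : ℕ → Set ℂ) (B : Set ℂ) : Prop :=
  (∀ k, A k ⊆ B) ∧
    ∀ U : Set ℂ, IsOpen U → U.Nonempty → U ⊆ B → ∃ K : ℕ, ∀ k > K, (U ∩ A k).Nonempty

/-- A subset of `ℂ` has `k`-fold dihedral symmetry if it is stable under complex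
conjugation and under rotation by `2π/k` about the origin. -/
def HasDihedralSymm (k : ℕ) (A : Set ℂ) : Prop :=
  (∀ z ∈ A, (starRingEnd ℂ) z ∈ A) ∧ ∀ z ∈ A, e2 (1 / k) * z ∈ A

/-- The `k`-fold dihedral closure of a subset of `ℂ`. -/
def dihedralClosure (k : ℕ) (A : Set ℂ) : Set ℂ :=
  ⋂₀ {B : Set ℂ | A ⊆ B ∧ HasDihedralSymm k B}

/-- The Gauss sum `g_k(t) = ∑_{j=1}^{p} e(t j^k / p)` of order `k` mod `p`. -/
noncomputable def gaussG (p k : ℕ) (t : ZMod p) : ℂ :=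
  ∑ j ∈ Finset.Icc 1 p, e2 ((((t * (j : ZMod p) ^ k).val : ℕ) : ℝ) / (p : ℝ))

/-- The Gauss sum `G(t,χ) = ∑_{j=1}^{p-1} χ(j) e(tj/p)` attached to a character `χ` mod `p`. -/
noncomputable def GSum (p : ℕ) (χ : DirichletCharacter ℂ p) (t : ZMod p) : ℂ :=
  ∑ j ∈ Finset.Icc 1 (p - 1), χ (j : ZMod p) * e2 ((((t * (j : ZMod p)).val : ℕ) : ℝ) / (p : ℝ))

section Aux

open Polynomial

lemma e2_eq_toCircle (n : ℕ) [NeZero n] (v : ZMod n) :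
    e2 ((v.val : ℝ) / (n : ℝ)) = (ZMod.toCircle v : ℂ) := by
  rw [ZMod.toCircle_apply, e2]
  push_cast
  ring_nf

lemma addchar_sum {ι A M : Type*} [AddCommMonoid A] [CommMonoid M] (ψ : AddChar A M)
    (s : Finset ι) (f : ι → A) : ψ (∑ i ∈ s, f i) = ∏ i ∈ s, ψ (f i) := by
  induction s using Finset.cons_induction with
  | empty => simp
  | cons a s ha ih => simp [AddChar.map_add_eq_mul, ih]

lemma circle_coe_zpow (z : Circle) (c : ℤ) : ((z ^ c : Circle) : ℂ) = (z : ℂ) ^ c :=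
  map_zpow' Circle.coeHom Circle.coe_inv z c

lemma order_reduce (d p a : ℕ) (hp : p.Prime) (hdp : d ∣ p - 1)
    (ha : 0 < a) (ω : (ZMod (p ^ a))ˣ) (hω : orderOf ω = d) :
    orderOf (ZMod.unitsMap (dvd_pow_self p ha.ne') ω) = d := by
  haveI : Fact p.Prime := ⟨hp⟩
  haveI : NeZero (p ^ a) := ⟨pow_ne_zero a hp.pos.ne'⟩
  set f := ZMod.unitsMap (dvd_pow_self p ha.ne' : p ∣ p ^ a)
  have hsurj : Function.Surjective f := ZMod.unitsMap_surjective _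
  set e := orderOf (f ω) with he
  have hed : e ∣ d := hω ▸ orderOf_map_dvd f ω
  have hcard : Nat.card (ZMod (p ^ a))ˣ = Nat.card f.ker * Nat.card (ZMod p)ˣ := by
    rw [← Nat.card_congr (QuotientGroup.quotientKerEquivOfSurjective f hsurj).toEquiv]
    rw [Subgroup.card_eq_card_quotient_mul_card_subgroup f.ker, mul_comm]
  have hc1 : Nat.card (ZMod (p ^ a))ˣ = p ^ (a - 1) * (p - 1) := by
    rw [Nat.card_eq_fintype_card, ZMod.card_units_eq_totient, Nat.totient_prime_pow hp ha]
  have hc2 : Nat.card (ZMod p)ˣ = p - 1 := by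
    rw [Nat.card_eq_fintype_card, ZMod.card_units_eq_totient, Nat.totient_prime hp]
  have hker : Nat.card f.ker = p ^ (a - 1) := by
    have hp1 : 0 < p - 1 := Nat.sub_pos_of_lt hp.one_lt
    have := hcard; rw [hc1, hc2] at this
    exact (Nat.eq_of_mul_eq_mul_right hp1 this.symm)
  have hmem : ω ^ e ∈ f.ker := by
    rw [MonoidHom.mem_ker, map_pow, pow_orderOf_eq_one]
  have hdvd : orderOf (ω ^ e) ∣ p ^ (a - 1) := hker ▸ Subgroup.orderOf_dvd_natCard f.ker hmem
  have hoe : orderOf (ω ^ e) = d / e := by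
    rw [orderOf_pow, hω, Nat.gcd_eq_right hed]
  rw [hoe] at hdvd
  have hcop : Nat.Coprime (d / e) p := by
    have h1 : d / e ∣ p - 1 := dvd_trans (Nat.div_dvd_of_dvd hed) hdp
    have : Nat.Coprime (p - 1) p := by
      exact (Nat.coprime_self_sub_left hp.one_le).mpr (Nat.coprime_one_left p)
    exact Nat.Coprime.coprime_dvd_left h1 this
  have hde1 : d / e = 1 := Nat.eq_one_of_dvd_coprimes (hcop.pow_right (a-1)) (dvd_refl _) hdvd
  have : e * (d / e) = d := Nat.mul_div_cancel' hed
  rw [hde1, mul_one] at this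
  exact he ▸ this

lemma cyclo_root (d p a : ℕ) (hd : 0 < d) (hp : p.Prime) (ha : 0 < a)
    (ω : (ZMod (p ^ a))ˣ) (hω : orderOf ω = d)
    (hbar : orderOf (ZMod.unitsMap (dvd_pow_self p ha.ne') ω) = d) :
    Polynomial.aeval ((ω : (ZMod (p ^ a)))) (Polynomial.cyclotomic d ℤ) = 0 := by
  haveI : Fact p.Prime := ⟨hp⟩
  haveI : NeZero (p ^ a) := ⟨pow_ne_zero a hp.pos.ne'⟩
  set x : ZMod (p ^ a) := (ω : ZMod (p ^ a)) with hx
  have hprod : ∏ e ∈ d.divisors, aeval x (cyclotomic e ℤ) = x ^ d - 1 := by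
    have h := prod_cyclotomic_eq_X_pow_sub_one hd ℤ
    have := congrArg (aeval x) h
    simpa [map_prod] using this
  have hxd : x ^ d - 1 = 0 := by
    have : ω ^ d = 1 := hω ▸ pow_orderOf_eq_one ω
    have : x ^ d = 1 := by rw [hx, ← Units.val_pow_eq_pow_val, this, Units.val_one]
    rw [this, sub_self]
  set g : ZMod (p ^ a) →+* ZMod p := ZMod.castHom (dvd_pow_self p ha.ne') (ZMod p) with hg
  have hunit : ∀ e ∈ d.divisors.erase d, IsUnit (aeval x (cyclotomic e ℤ)) := by
    intro e he
    obtain ⟨hne, hmem⟩ := Finset.mem_erase.mp he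
    obtain ⟨hed, -⟩ := Nat.mem_divisors.mp hmem
    set y := aeval x (cyclotomic e ℤ) with hy
    have hgy : g y = aeval (g x) (cyclotomic e ℤ) :=
      (aeval_algHom_apply g.toIntAlgHom x (cyclotomic e ℤ)).symm
    have hgx : g x = ((ZMod.unitsMap (dvd_pow_self p ha.ne') ω : (ZMod p)ˣ) : ZMod p) := rfl
    have hne0 : g y ≠ 0 := by
      rw [hgy, hgx]
      intro h0
      have hdvd : (cyclotomic e ℤ) ∣ X ^ e - 1 := cyclotomic.dvd_X_pow_sub_one e ℤ
      obtain ⟨c, hc⟩ := hdvd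
      have : ((ZMod.unitsMap (dvd_pow_self p ha.ne') ω : (ZMod p)ˣ) : ZMod p) ^ e - 1 = 0 := by
        have := congrArg
          (aeval ((ZMod.unitsMap (dvd_pow_self p ha.ne') ω : (ZMod p)ˣ) : ZMod p)) hc
        simp only [map_mul, map_sub, map_pow, aeval_X, map_one] at this
        rw [this, h0, zero_mul]
      have hpow : (ZMod.unitsMap (dvd_pow_self p ha.ne') ω) ^ e = 1 := by
        ext
        rw [Units.val_pow_eq_pow_val, Units.val_one]
        linear_combination this
      have := orderOf_dvd_of_pow_eq_one hpow
      rw [hbar] at this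
      exact hne (Nat.dvd_antisymm hed this)
    have hgyv : g y = (y.val : ZMod p) := by
      rw [hg, ZMod.castHom_apply, ZMod.natCast_val]
    have hyval : (y.val : ZMod p) ≠ 0 := hgyv ▸ hne0
    have hnd : ¬ p ∣ y.val := fun h => hyval ((ZMod.natCast_eq_zero_iff _ _).mpr h)
    have hcop : Nat.Coprime y.val (p ^ a) :=
      Nat.Coprime.pow_right a ((Nat.Prime.coprime_iff_not_dvd hp).mpr hnd).symm
    have := (ZMod.isUnit_iff_coprime y.val (p ^ a)).mpr hcop
    rwa [ZMod.natCast_zmod_val] at this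
  have hins : aeval x (cyclotomic d ℤ) * ∏ e ∈ d.divisors.erase d, aeval x (cyclotomic e ℤ)
      = ∏ e ∈ d.divisors, aeval x (cyclotomic e ℤ) :=
    Finset.mul_prod_erase d.divisors (fun e => aeval x (cyclotomic e ℤ))
      (Nat.mem_divisors_self d hd.ne')
  have hgen : ∀ (s : Finset ℕ), (∀ e ∈ s, IsUnit (aeval x (cyclotomic e ℤ))) →
      IsUnit (∏ e ∈ s, aeval x (cyclotomic e ℤ)) := by
    intro s
    induction s using Finset.cons_induction with
    | empty => simp
    | cons b t hb ih =>
      intro h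
      rw [Finset.prod_cons]
      exact (h b (Finset.mem_cons_self b t)).mul
        (ih fun e he => h e (Finset.mem_cons.mpr (Or.inr he)))
  have hU : IsUnit (∏ e ∈ d.divisors.erase d, aeval x (cyclotomic e ℤ)) :=
    hgen _ hunit
  have h0 : aeval x (cyclotomic d ℤ) * ∏ e ∈ d.divisors.erase d, aeval x (cyclotomic e ℤ) = 0 := by
    rw [hins, hprod, hxd]
  exact (hU.mul_left_eq_zero).mp h0

lemma pow_eq_sum_cExp {R : Type*} [CommRing R] (d : ℕ) (hd : 0 < d) (x : R)
    (hcyc : Polynomial.aeval x (Polynomial.cyclotomic d ℤ) = 0) (k : ℕ) :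
    x ^ k = ∑ j ∈ Finset.range d.totient, cExp d j k • x ^ j := by
  have hmonic : (cyclotomic d ℤ).Monic := cyclotomic.monic d ℤ
  have hdeg : (cyclotomic d ℤ).natDegree = d.totient := natDegree_cyclotomic d ℤ
  have hne1 : cyclotomic d ℤ ≠ 1 := by
    intro h
    have := hdeg
    rw [h, natDegree_one] at this
    exact (Nat.totient_pos.mpr hd).ne this
  set r := (X : Polynomial ℤ) ^ k %ₘ cyclotomic d ℤ with hr
  have hsplit : r + cyclotomic d ℤ * ((X : Polynomial ℤ) ^ k /ₘ cyclotomic d ℤ)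
      = (X : Polynomial ℤ) ^ k := modByMonic_add_div _ _
  have h1 : x ^ k = aeval x r := by
    have := congrArg (aeval x) hsplit
    simp only [map_add, map_mul, map_pow, aeval_X, hcyc, zero_mul, add_zero] at this
    exact this.symm
  have hn : r.natDegree < d.totient := hdeg ▸ natDegree_modByMonic_lt _ hmonic hne1
  rw [h1, aeval_eq_sum_range' hn]
  rfl

end Aux

/-- For a positive integer `d`, an odd prime `p ≡ 1 (mod d)`, a positive
integer `a`, and a unit `ω` of multiplicative order `d` mod `p^a`, the image of the cyclic
supercharacter `σ_ω` mod `p^a` is contained in the image of `g_d` on the torus. -/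


theorem stmt0 (d : ℕ) (hd : 0 < d) (p : ℕ) (hp : p.Prime) (hodd : Odd p)
    (hpd : p ≡ 1 [MOD d]) (a : ℕ) (ha : 0 < a) (ω : (ZMod (p ^ a))ˣ)
    (hω : orderOf ω = d) :
    Set.range (cyclicSuperchar (p ^ a) ω) ⊆ gImage d := by
  haveI : Fact p.Prime := ⟨hp⟩
  haveI : NeZero (p ^ a) := ⟨pow_ne_zero a hp.pos.ne'⟩
  have hdp1 : d ∣ p - 1 := (Nat.modEq_iff_dvd' hp.one_le).mp hpd.symm
  have hbar := order_reduce d p a hp hdp1 ha ω hω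
  have hcyc := cyclo_root d p a hd hp ha ω hω hbar
  rintro w ⟨y, rfl⟩
  set x : ZMod (p ^ a) := (ω : ZMod (p ^ a)) with hx
  refine ⟨fun j => (ZMod.toCircle (x ^ (j : ℕ) * y) : ℂ), fun j => Circle.norm_coe _, ?_⟩
  unfold gphi cyclicSuperchar
  rw [hω]
  apply Finset.sum_congr rfl
  intro k _
  have hterm : ((ω ^ k : (ZMod (p ^ a))ˣ) : ZMod (p ^ a)) = x ^ k :=
    Units.val_pow_eq_pow_val ω k
  have hsum : ∑ j : Fin d.totient, cExp d (j : ℕ) k • (x ^ (j : ℕ) * y) = x ^ k * y := by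
    rw [Fin.sum_univ_eq_sum_range (fun j => cExp d j k • (x ^ j * y))]
    simp_rw [← smul_mul_assoc]
    rw [← Finset.sum_mul, ← pow_eq_sum_cExp d hd x hcyc k]
  calc
    ∏ j : Fin d.totient, (ZMod.toCircle (x ^ (j : ℕ) * y) : ℂ) ^ cExp d (j : ℕ) k
      = ∏ j : Fin d.totient,
          ((ZMod.toCircle (x ^ (j : ℕ) * y) ^ cExp d (j : ℕ) k : Circle) : ℂ) := by
        simp_rw [circle_coe_zpow]
    _ = ((∏ j : Fin d.totient,
          ZMod.toCircle (x ^ (j : ℕ) * y) ^ cExp d (j : ℕ) k : Circle) : ℂ) := by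
        exact (map_prod Circle.coeHom (fun j : Fin d.totient => ZMod.toCircle (x ^ (j : ℕ) * y) ^ cExp d (j : ℕ) k) Finset.univ).symm
    _ = ((ZMod.toCircle (∑ j : Fin d.totient, cExp d (j : ℕ) k • (x ^ (j : ℕ) * y))
          : Circle) : ℂ) := by
        rw [addchar_sum]
        simp_rw [AddChar.map_zsmul_eq_zpow]
    _ = (ZMod.toCircle (x ^ k * y) : ℂ) := by rw [hsum]
    _ = e2 (((((ω ^ k : (ZMod (p ^ a))ˣ) : ZMod (p ^ a)) * y).val : ℝ) / ((p ^ a : ℕ) : ℝ)) := by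
        rw [hterm, e2_eq_toCircle]
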